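/- Let l be an odd prime and h ≥ 1. Let J_h(1) ∈ GL_h(𝔽_l) be the Jordan block of size h with eigenvalue 1 (ones on the diagonal and on the superdiagonal, zeros elsewhere). Then the block matrix σ = [[J_h(1), J_h(1)], [0, (J_h(1)ᵀ)⁻¹]] belongs to the symplectic group Sp_{2h}(𝔽_l), and the eigenspace of σ for the eigenvalue 1, i.e. the kernel of σ − I_{2h} acting on 𝔽_l^{2h}, has dimension exactly 1. (Claim (iv) of Example 3.6, providing the matrix σ_i required by Assumption II(1)(iv) and Remark 5.3.) -/

import Mathlib

open scoped Matrix

/-- The unipotent upper-triangular Jordan block `J_h(1)` of size `h` with eigenvalue `1`: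
ones on the diagonal and the superdiagonal, zeros elsewhere. -/
def jordanBlockOne (l h : ℕ) : Matrix (Fin h) (Fin h) (ZMod l) :=
  Matrix.of fun i j => if (j : ℕ) = (i : ℕ) ∨ (j : ℕ) = (i : ℕ) + 1 then 1 else 0

section aux

variable (l h : ℕ)

lemma jb_blockTriangular : (jordanBlockOne l h).BlockTriangular id := by
  intro i j hij
  simp only [id] at hij
  simp only [jordanBlockOne, Matrix.of_apply, ite_eq_right_iff]
  intro hc
  exfalso
  have := Fin.lt_iff_val_lt_val.mp hij
  omega

lemma jb_det : (jordanBlockOne l h).det = 1 := by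
  rw [Matrix.det_of_upperTriangular (jb_blockTriangular l h)]
  simp [jordanBlockOne]

lemma jb_isUnit_det : IsUnit (jordanBlockOne l h).det := by
  rw [jb_det]; exact isUnit_one

lemma jb_mulVec (z : Fin h → ZMod l) (i : Fin h) :
    (jordanBlockOne l h).mulVec z i
      = z i + if hi : (i : ℕ) + 1 < h then z ⟨(i : ℕ) + 1, hi⟩ else 0 := by
  classical
  have key : ∀ j : Fin h, jordanBlockOne l h i j * z j =
      (if j = i then z j else 0)
        + (if hi : (i : ℕ) + 1 < h then (if j = ⟨(i : ℕ) + 1, hi⟩ then z j else 0) else 0) := by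
    intro j
    simp only [jordanBlockOne, Matrix.of_apply]
    by_cases h1 : j = i
    · subst h1
      rw [if_pos rfl, if_pos (Or.inl rfl), one_mul]
      have hz : (if hi : (j : ℕ) + 1 < h then
          (if j = ⟨(j : ℕ) + 1, hi⟩ then z j else 0) else 0) = 0 := by
        split_ifs with hi hj
        · exact absurd (Fin.ext_iff.mp hj) (show ¬ ((j : ℕ) = (j : ℕ) + 1) by omega)
        · rfl
        · rfl
      rw [hz, add_zero]
    · by_cases h2 : (j : ℕ) = (i : ℕ) + 1
      · have hi : (i : ℕ) + 1 < h := h2 ▸ j.isLt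
        have hj : j = ⟨(i : ℕ) + 1, hi⟩ := Fin.ext (show (j : ℕ) = (i : ℕ) + 1 from h2)
        rw [if_pos (Or.inr h2), if_neg h1, dif_pos hi, if_pos hj, one_mul, zero_add]
      · have h3 : ¬ ((j : ℕ) = (i : ℕ) ∨ (j : ℕ) = (i : ℕ) + 1) := by
          push_neg
          exact ⟨fun hc => h1 (Fin.ext hc), h2⟩
        rw [if_neg h3, if_neg h1, zero_mul, zero_add]
        split_ifs with h4 h5
        · exact absurd (Fin.ext_iff.mp h5) (show ¬ ((j : ℕ) = (i : ℕ) + 1) from h2)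
        · rfl
        · rfl
  rw [Matrix.mulVec, dotProduct]
  rw [Finset.sum_congr rfl fun j _ => key j, Finset.sum_add_distrib]
  congr 1
  · simp
  · split_ifs with hi
    · simp
    · simp

lemma jb_transpose_mulVec (z : Fin h → ZMod l) (i : Fin h) :
    (jordanBlockOne l h)ᵀ.mulVec z i
      = z i + if hi : 1 ≤ (i : ℕ) then z ⟨(i : ℕ) - 1, by omega⟩ else 0 := by
  classical
  have key : ∀ j : Fin h, (jordanBlockOne l h)ᵀ i j * z j =
      (if j = i then z j else 0)
        + (if hi : 1 ≤ (i : ℕ) then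
            (if j = ⟨(i : ℕ) - 1, by omega⟩ then z j else 0) else 0) := by
    intro j
    simp only [jordanBlockOne, Matrix.transpose_apply, Matrix.of_apply]
    by_cases h1 : j = i
    · subst h1
      rw [if_pos rfl, if_pos (Or.inl rfl), one_mul]
      have hz : (if hi : 1 ≤ (j : ℕ) then
          (if j = ⟨(j : ℕ) - 1, by omega⟩ then z j else 0) else 0) = 0 := by
        split_ifs with hi hj
        · exact absurd (Fin.ext_iff.mp hj) (show ¬ ((j : ℕ) = (j : ℕ) - 1) by omega)
        · rfl
        · rfl
      rw [hz, add_zero]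
    · by_cases h2 : (i : ℕ) = (j : ℕ) + 1
      · have hi : 1 ≤ (i : ℕ) := by omega
        have hj : j = ⟨(i : ℕ) - 1, by omega⟩ :=
          Fin.ext (show (j : ℕ) = (i : ℕ) - 1 by omega)
        rw [if_pos (Or.inr h2), if_neg h1, dif_pos hi, if_pos hj, one_mul, zero_add]
      · have h3 : ¬ ((i : ℕ) = (j : ℕ) ∨ (i : ℕ) = (j : ℕ) + 1) := by
          push_neg
          exact ⟨fun hc => h1 (Fin.ext hc.symm), h2⟩
        rw [if_neg h3, if_neg h1, zero_mul, zero_add]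
        split_ifs with h4 h5
        · exact absurd (Fin.ext_iff.mp h5) (show ¬ ((j : ℕ) = (i : ℕ) - 1) by omega)
        · rfl
        · rfl
  rw [Matrix.mulVec, dotProduct]
  rw [Finset.sum_congr rfl fun j _ => key j, Finset.sum_add_distrib]
  congr 1
  · simp
  · split_ifs with hi
    · simp
    · simp

end aux

/-!
Claim (iv) of Example 3.6: for an odd prime `l` and `h ≥ 1`, the block matrix
`σ = [[J_h(1), J_h(1)], [0, (J_h(1)ᵀ)⁻¹]]` lies in `Sp_{2h}(𝔽_l)` and the eigenspace of
`σ` for the eigenvalue `1`, i.e. `ker (σ - I_{2h})` acting on `𝔽_l^{2h}`, has dimension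
exactly `1`.
-/
set_option maxHeartbeats 1000000 in
theorem jordan_block_symplectic_matrix_eigenspace_one_dimensional
    (l : ℕ) [Fact l.Prime] (hl : Odd l) (h : ℕ) (hh : 1 ≤ h) :
    Matrix.fromBlocks (jordanBlockOne l h) (jordanBlockOne l h)
        0 ((jordanBlockOne l h)ᵀ)⁻¹ ∈ Matrix.symplecticGroup (Fin h) (ZMod l) ∧
    Module.finrank (ZMod l)
      (LinearMap.ker
        ((Matrix.fromBlocks (jordanBlockOne l h) (jordanBlockOne l h)
            0 ((jordanBlockOne l h)ᵀ)⁻¹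
          - (1 : Matrix (Fin h ⊕ Fin h) (Fin h ⊕ Fin h) (ZMod l))).mulVecLin)) = 1 := by
  classical
  set J := jordanBlockOne l h with hJ
  set C := (Jᵀ)⁻¹ with hC
  have hdet : IsUnit J.det := jb_isUnit_det l h
  have hdetT : IsUnit Jᵀ.det := by rwa [Matrix.det_transpose]
  have h1 : J * Cᵀ = 1 := by
    rw [hC, ← Matrix.transpose_nonsing_inv, Matrix.transpose_transpose,
      Matrix.mul_nonsing_inv _ hdet]
  have h2 : C * Jᵀ = 1 := Matrix.nonsing_inv_mul _ hdetT
  constructor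
  · rw [SymplecticGroup.mem_iff, Matrix.J, Matrix.fromBlocks_transpose,
      Matrix.fromBlocks_multiply, Matrix.fromBlocks_multiply]
    simp only [Matrix.mul_zero, Matrix.mul_one, Matrix.zero_mul, Matrix.mul_neg,
      Matrix.neg_mul, zero_add, add_zero, Matrix.transpose_zero, neg_zero, h1, h2]
    rw [add_neg_cancel]
  · -- the kernel computation
    set σ := Matrix.fromBlocks J J (0 : Matrix (Fin h) (Fin h) (ZMod l)) C with hσ
    set z : Fin h := ⟨0, hh⟩ with hz
    set v : Fin h ⊕ Fin h → ZMod l := Pi.single (Sum.inl z) 1 with hv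
    have hcol : ∀ k, σ k (Sum.inl z) = (1 : Matrix (Fin h ⊕ Fin h) (Fin h ⊕ Fin h) (ZMod l)) k (Sum.inl z) := by
      intro k
      rcases k with i | i
      · simp only [hσ, Matrix.fromBlocks_apply₁₁, hJ, jordanBlockOne, Matrix.of_apply,
          Matrix.one_apply]
        by_cases hi : i = z
        · subst hi; simp
        · have : ¬ ((z : ℕ) = (i : ℕ) ∨ (z : ℕ) = (i : ℕ) + 1) := by
            push_neg
            constructor
            · intro hc; exact hi (Fin.ext hc).symm
            · simp [hz]
          have hne : (Sum.inl i : Fin h ⊕ Fin h) ≠ Sum.inl z := fun hc => hi (Sum.inl.inj hc)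
          rw [if_neg this, if_neg hne]
      · simp [hσ, Matrix.one_apply]
    have hker : LinearMap.ker (σ - 1).mulVecLin = Submodule.span (ZMod l) {v} := by
      apply le_antisymm
      · intro u hu
        rw [LinearMap.mem_ker, Matrix.mulVecLin_apply, Matrix.sub_mulVec,
          Matrix.one_mulVec, sub_eq_zero] at hu
        rw [hσ, Matrix.fromBlocks_mulVec] at hu
        have hA : ∀ i, J.mulVec (u ∘ Sum.inl) i + J.mulVec (u ∘ Sum.inr) i = u (Sum.inl i) := by
          intro i
          have := congrFun hu (Sum.inl i)
          simpa using this
        have hB : C.mulVec (u ∘ Sum.inr) = u ∘ Sum.inr := by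
          funext i
          have := congrFun hu (Sum.inr i)
          simpa using this
        -- from hB : y = Jᵀ y
        have hy' : Jᵀ.mulVec (u ∘ Sum.inr) = u ∘ Sum.inr := by
          have := congrArg (fun w => Jᵀ.mulVec w) hB
          simpa only [Matrix.mulVec_mulVec, hC, Matrix.mul_nonsing_inv _ hdetT,
            Matrix.one_mulVec] using this.symm
        have hy1 : ∀ i : Fin h, (i : ℕ) + 1 < h → u (Sum.inr i) = 0 := by
          intro i hi
          have := congrFun hy' ⟨(i : ℕ) + 1, hi⟩
          rw [jb_transpose_mulVec] at this
          simp only [Function.comp_apply] at this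
          rw [dif_pos (by omega : 1 ≤ (i : ℕ) + 1)] at this
          have hieq : (⟨(i : ℕ) + 1 - 1, by omega⟩ : Fin h) = i :=
            Fin.ext (show (i : ℕ) + 1 - 1 = (i : ℕ) by omega)
          rw [hieq] at this
          have := left_eq_add.mp this.symm
          exact this
        have hlast : u (Sum.inr ⟨h - 1, by omega⟩) = 0 := by
          have := hA ⟨h - 1, by omega⟩
          rw [jb_mulVec, jb_mulVec] at this
          rw [dif_neg (by omega : ¬ (h - 1 + 1 < h)), dif_neg (by omega : ¬ (h - 1 + 1 < h))] at this
          simp only [Function.comp_apply, add_zero] at this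
          linear_combination this
        have hy : ∀ i : Fin h, u (Sum.inr i) = 0 := by
          intro i
          by_cases hi : (i : ℕ) + 1 < h
          · exact hy1 i hi
          · have : i = ⟨h - 1, by omega⟩ :=
              Fin.ext (show (i : ℕ) = h - 1 by have := i.isLt; omega)
            rw [this]; exact hlast
        have hx : ∀ i : Fin h, (i : ℕ) ≠ 0 → u (Sum.inl i) = 0 := by
          intro i hi
          have hlt : ((⟨(i : ℕ) - 1, by omega⟩ : Fin h) : ℕ) + 1 < h :=
            show (i : ℕ) - 1 + 1 < h by have := i.isLt; omega
          have := hA ⟨(i : ℕ) - 1, by omega⟩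
          rw [jb_mulVec, jb_mulVec, dif_pos hlt, dif_pos hlt] at this
          simp only [Function.comp_apply] at this
          have hieq : (⟨((⟨(i : ℕ) - 1, by omega⟩ : Fin h) : ℕ) + 1, hlt⟩ : Fin h) = i :=
            Fin.ext (show (i : ℕ) - 1 + 1 = (i : ℕ) by omega)
          rw [hieq, hy, hy] at this
          linear_combination this
        rw [Submodule.mem_span_singleton]
        refine ⟨u (Sum.inl z), ?_⟩
        funext k
        rcases k with i | i
        · by_cases hi : i = z
          · subst hi
            simp [hv]
          · have hi0 : (i : ℕ) ≠ 0 := fun hc => hi (Fin.ext (by simp [hz, hc]))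
            rw [hx i hi0]
            simp only [hv, Pi.smul_apply]
            rw [Pi.single_eq_of_ne (fun hc => hi (Sum.inl.inj hc))]
            simp
        · rw [hy i]
          simp only [hv, Pi.smul_apply]
          rw [Pi.single_eq_of_ne (by simp)]
          simp
      · rw [Submodule.span_le, Set.singleton_subset_iff]
        rw [SetLike.mem_coe, LinearMap.mem_ker, Matrix.mulVecLin_apply, hv,
          Matrix.mulVec_single_one]
        funext k
        have := hcol k
        simp only [Matrix.col_apply, Matrix.sub_apply] at *
        rw [this]
        simp
    rw [hker, finrank_span_singleton]
    intro hc
    have := congrFun hc (Sum.inl z)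
    simp [hv] at this
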